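/- Let g be a finite-dimensional Lie algebra over a field k of characteristic 0 whose Killing form κ is nondegenerate, and let σ₁, σ₂ be commuting involutions of g with quaternionic decomposition g = ⊕_{i,j∈{0,1}} g_{ij}. Fix x ∈ g₁₀, y ∈ g₁₁ and ξ ∈ g₀₁. Then κ(ξ, [x,η] + [ζ,y]) = 0 for all η ∈ g₁₁ and all ζ ∈ g₁₀ if and only if [ξ,x] = 0 and [ξ,y] = 0. (This identifies the orthogonal complement in g₀₁ of the image of the differential of the commutator map g₁₀ × g₁₁ → g₀₁ at (x,y) with z_g(x) ∩ z_g(y) ∩ g₀₁.) -/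

import Mathlib

open Module

section Defs

variable (k : Type*) [Field k] (g : Type*) [LieRing g] [LieAlgebra k g]

/-- The eigenspace of a Lie algebra automorphism `σ` with eigenvalue `ε`,
as a `k`-submodule of `g`.  For an involution `σ`, `autEigenspace k g σ 1` is the
fixed-point space `g₀` and `autEigenspace k g σ (-1)` is `g₁`. -/
def autEigenspace (σ : g ≃ₗ⁅k⁆ g) (ε : k) : Submodule k g where
  carrier := {x | σ x = ε • x}
  add_mem' {a b} ha hb := by
    have : σ (a + b) = σ a + σ b := map_add σ.toLieHom a b
    simp only [Set.mem_setOf_eq] at ha hb ⊢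
    rw [this, ha, hb, smul_add]
  zero_mem' := by
    have : σ (0 : g) = 0 := map_zero σ.toLieHom
    simp only [Set.mem_setOf_eq, this, smul_zero]
  smul_mem' t a ha := by
    have : σ (t • a) = t • σ a := map_smul σ.toLieHom t a
    simp only [Set.mem_setOf_eq] at ha ⊢
    rw [this, ha, smul_comm]

/-- The centraliser `z_g(x) = {z ∈ g | [z,x] = 0}` of an element `x` of a Lie algebra,
as a submodule. -/
def centralizerSubmodule (x : g) : Submodule k g where
  carrier := {z | ⁅z, x⁆ = 0}
  add_mem' {a b} ha hb := by
    simp only [Set.mem_setOf_eq] at ha hb ⊢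
    rw [add_lie, ha, hb, add_zero]
  zero_mem' := zero_lie x
  smul_mem' t a ha := by
    simp only [Set.mem_setOf_eq] at ha ⊢
    rw [smul_lie, ha, smul_zero]

end Defs

section Aux

variable {k : Type*} [Field k] [CharZero k]
variable {g : Type*} [LieRing g] [LieAlgebra k g] [FiniteDimensional k g]

omit [CharZero k] [FiniteDimensional k g] in
lemma mem_autEigenspace_iff {σ : g ≃ₗ⁅k⁆ g} {ε : k} {x : g} :
    x ∈ autEigenspace k g σ ε ↔ σ x = ε • x := Iff.rfl

/-- If `a` lies in a joint eigenspace and is Killing-orthogonal to that whole joint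
eigenspace, then (by averaging over the group generated by the involutions) it is
orthogonal to everything, hence zero. -/
lemma eq_zero_of_orth_eigenspace
    (hkill : (killingForm k g).Nondegenerate)
    (σ₁ σ₂ : g ≃ₗ⁅k⁆ g) (hσ₁ : ∀ x, σ₁ (σ₁ x) = x) (hσ₂ : ∀ x, σ₂ (σ₂ x) = x)
    (hcomm : ∀ x, σ₁ (σ₂ x) = σ₂ (σ₁ x))
    (ε₁ ε₂ : k) (hε₁ : ε₁ * ε₁ = 1) (hε₂ : ε₂ * ε₂ = 1)
    (a : g) (ha : a ∈ autEigenspace k g σ₁ ε₁ ⊓ autEigenspace k g σ₂ ε₂)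
    (h : ∀ w ∈ autEigenspace k g σ₁ ε₁ ⊓ autEigenspace k g σ₂ ε₂,
      killingForm k g a w = 0) : a = 0 := by
  have ha1 : σ₁ a = ε₁ • a := ha.1
  have ha2 : σ₂ a = ε₂ • a := ha.2
  have s1add : ∀ u v : g, σ₁ (u + v) = σ₁ u + σ₁ v :=
    fun u v => map_add σ₁.toLieHom u v
  have s2add : ∀ u v : g, σ₂ (u + v) = σ₂ u + σ₂ v :=
    fun u v => map_add σ₂.toLieHom u v
  have s1smul : ∀ (t : k) (u : g), σ₁ (t • u) = t • σ₁ u :=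
    fun t u => map_smul σ₁.toLieHom t u
  have s2smul : ∀ (t : k) (u : g), σ₂ (t • u) = t • σ₂ u :=
    fun t u => map_smul σ₂.toLieHom t u
  apply hkill.1
  intro w
  set w' : g := w + ε₁ • σ₁ w + ε₂ • σ₂ w + (ε₁ * ε₂) • σ₁ (σ₂ w) with hw'
  have hmem : w' ∈ autEigenspace k g σ₁ ε₁ ⊓ autEigenspace k g σ₂ ε₂ := by
    constructor
    · show σ₁ w' = ε₁ • w'
      simp only [hw', s1add, s1smul, hσ₁, smul_add, smul_smul, hcomm]
      match_scalars <;>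
        first
          | linear_combination hε₁
          | linear_combination -hε₁
          | linear_combination hε₂
          | linear_combination -hε₂
          | linear_combination ε₂ * hε₁
          | linear_combination -(ε₂ * hε₁)
          | linear_combination ε₁ * hε₂
          | linear_combination -(ε₁ * hε₂)
          | ring
    · show σ₂ w' = ε₂ • w'
      simp only [hw', s2add, s2smul, hσ₂, smul_add, smul_smul, hcomm]
      match_scalars <;>
        first
          | linear_combination hε₁
          | linear_combination -hε₁
          | linear_combination hε₂
          | linear_combination -hε₂
          | linear_combination ε₂ * hε₁
          | linear_combination -(ε₂ * hε₁)
          | linear_combination ε₁ * hε₂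
          | linear_combination -(ε₁ * hε₂)
          | ring
  have h0 := h w' hmem
  -- invariance of the Killing form under the automorphisms
  have inv1 : ∀ u v : g, killingForm k g (σ₁ u) (σ₁ v) = killingForm k g u v :=
    fun u v => LieAlgebra.killingForm_of_equiv_apply σ₁ u v
  have inv2 : ∀ u v : g, killingForm k g (σ₂ u) (σ₂ v) = killingForm k g u v :=
    fun u v => LieAlgebra.killingForm_of_equiv_apply σ₂ u v
  have e1 : killingForm k g a (σ₁ w) = ε₁ * killingForm k g a w := by
    calc killingForm k g a (σ₁ w) = killingForm k g (σ₁ (σ₁ a)) (σ₁ w) := by rw [hσ₁]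
    _ = killingForm k g (σ₁ a) w := inv1 _ _
    _ = ε₁ * killingForm k g a w := by rw [ha1, map_smul, LinearMap.smul_apply, smul_eq_mul]
  have e2 : killingForm k g a (σ₂ w) = ε₂ * killingForm k g a w := by
    calc killingForm k g a (σ₂ w) = killingForm k g (σ₂ (σ₂ a)) (σ₂ w) := by rw [hσ₂]
    _ = killingForm k g (σ₂ a) w := inv2 _ _
    _ = ε₂ * killingForm k g a w := by rw [ha2, map_smul, LinearMap.smul_apply, smul_eq_mul]
  have e3 : killingForm k g a (σ₁ (σ₂ w)) = ε₁ * (ε₂ * killingForm k g a w) := by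
    calc killingForm k g a (σ₁ (σ₂ w)) = killingForm k g (σ₁ (σ₁ a)) (σ₁ (σ₂ w)) := by rw [hσ₁]
    _ = killingForm k g (σ₁ a) (σ₂ w) := inv1 _ _
    _ = ε₁ * killingForm k g a (σ₂ w) := by rw [ha1, map_smul, LinearMap.smul_apply, smul_eq_mul]
    _ = ε₁ * (ε₂ * killingForm k g a w) := by rw [e2]
  have expand : killingForm k g a w' = 4 * killingForm k g a w := by
    simp only [hw', map_add, map_smul, smul_eq_mul, e1, e2, e3]
    linear_combination (killingForm k g a w) * ((1 + ε₂*ε₂) * hε₁ + 2 * hε₂)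
  rw [h0] at expand
  have h4 : (4 : k) ≠ 0 := by norm_num
  exact (mul_eq_zero.mp expand.symm).resolve_left h4

end Aux

/-- Let `g` be a finite-dimensional Lie algebra over a field `k` of
characteristic 0 with nondegenerate Killing form `κ`, and let `σ₁, σ₂` be commuting
involutions of `g` with quaternionic decomposition `g = ⊕ g_{ij}`.  Fix `x ∈ g₁₀`,
`y ∈ g₁₁` and `ξ ∈ g₀₁`.  Then `κ(ξ, [x,η] + [ζ,y]) = 0` for all `η ∈ g₁₁` and all
`ζ ∈ g₁₀` if and only if `[ξ,x] = 0` and `[ξ,y] = 0`. -/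
theorem killing_orthogonal_image_differential
    (k : Type*) [Field k] [CharZero k]
    (g : Type*) [LieRing g] [LieAlgebra k g] [FiniteDimensional k g]
    (hkill : (killingForm k g).Nondegenerate)
    (σ₁ σ₂ : g ≃ₗ⁅k⁆ g) (hσ₁ : ∀ x, σ₁ (σ₁ x) = x) (hσ₂ : ∀ x, σ₂ (σ₂ x) = x)
    (hcomm : ∀ x, σ₁ (σ₂ x) = σ₂ (σ₁ x))
    (x y ξ : g)
    (hx : x ∈ autEigenspace k g σ₁ (-1) ⊓ autEigenspace k g σ₂ 1)
    (hy : y ∈ autEigenspace k g σ₁ (-1) ⊓ autEigenspace k g σ₂ (-1))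
    (hξ : ξ ∈ autEigenspace k g σ₁ 1 ⊓ autEigenspace k g σ₂ (-1)) :
    (∀ η ∈ autEigenspace k g σ₁ (-1) ⊓ autEigenspace k g σ₂ (-1),
      ∀ ζ ∈ autEigenspace k g σ₁ (-1) ⊓ autEigenspace k g σ₂ 1,
        killingForm k g ξ (⁅x, η⁆ + ⁅ζ, y⁆) = 0) ↔ ⁅ξ, x⁆ = 0 ∧ ⁅ξ, y⁆ = 0 := by
  have hx1 : σ₁ x = (-1 : k) • x := hx.1
  have hx2 : σ₂ x = x := by have h : σ₂ x = (1 : k) • x := hx.2; rwa [one_smul] at h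
  have hy1 : σ₁ y = (-1 : k) • y := hy.1
  have hy2 : σ₂ y = (-1 : k) • y := hy.2
  have hξ1 : σ₁ ξ = ξ := by have h : σ₁ ξ = (1 : k) • ξ := hξ.1; rwa [one_smul] at h
  have hξ2 : σ₂ ξ = (-1 : k) • ξ := hξ.2
  -- bracket relations
  have hξx : ⁅ξ, x⁆ ∈ autEigenspace k g σ₁ (-1) ⊓ autEigenspace k g σ₂ (-1) := by
    constructor
    · show σ₁ ⁅ξ, x⁆ = (-1 : k) • ⁅ξ, x⁆
      rw [LieEquiv.map_lie, hξ1, hx1]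
      simp
    · show σ₂ ⁅ξ, x⁆ = (-1 : k) • ⁅ξ, x⁆
      rw [LieEquiv.map_lie, hξ2, hx2]
      simp
  have hξy : ⁅ξ, y⁆ ∈ autEigenspace k g σ₁ (-1) ⊓ autEigenspace k g σ₂ 1 := by
    constructor
    · show σ₁ ⁅ξ, y⁆ = (-1 : k) • ⁅ξ, y⁆
      rw [LieEquiv.map_lie, hξ1, hy1]
      simp
    · show σ₂ ⁅ξ, y⁆ = (1 : k) • ⁅ξ, y⁆
      rw [LieEquiv.map_lie, hξ2, hy2]
      simp
  constructor
  · intro H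
    constructor
    · refine eq_zero_of_orth_eigenspace hkill σ₁ σ₂ hσ₁ hσ₂ hcomm (-1) (-1)
        (by ring) (by ring) _ hξx ?_
      intro w hw
      have := H w hw 0 (Submodule.zero_mem _)
      rw [zero_lie, add_zero] at this
      rw [LieModule.traceForm_apply_lie_apply, this]
    · refine eq_zero_of_orth_eigenspace hkill σ₁ σ₂ hσ₁ hσ₂ hcomm (-1) 1
        (by ring) (by ring) _ hξy ?_
      intro w hw
      have := H 0 (Submodule.zero_mem _) w hw
      rw [lie_zero, zero_add] at this
      have key : killingForm k g ⁅ξ, y⁆ w = - killingForm k g ξ ⁅w, y⁆ := by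
        rw [LieModule.traceForm_apply_lie_apply, ← lie_skew w y, map_neg, neg_neg]
      rw [key, this, neg_zero]
  · rintro ⟨h1, h2⟩ η hη ζ hζ
    have e1 : killingForm k g ξ ⁅x, η⁆ = 0 := by
      rw [← LieModule.traceForm_apply_lie_apply, h1, map_zero, LinearMap.zero_apply]
    have e2 : killingForm k g ξ ⁅ζ, y⁆ = 0 := by
      have : killingForm k g ξ ⁅ζ, y⁆ = - killingForm k g ⁅ξ, y⁆ ζ := by
        rw [LieModule.traceForm_apply_lie_apply, ← lie_skew ζ y, map_neg]
      rw [this, h2, map_zero, LinearMap.zero_apply, neg_zero]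
    rw [map_add, e1, e2, add_zero]
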